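/- Let O be an ELU ontology and C, ∃r.D be EL concepts. If O ⊨ C ⊑ ∃r.D and C contains no top-level conjunct ∃r.C' with O ⊨ C' ⊑ D, then D is O-generatable, i.e., there exists ∃r'.E ∈ sub(O) occurring on the right-hand side of an inclusion in O with O ⊨ E ⊑ D. -/

import Mathlib

namespace DL

/- Basic description-logic framework: concepts, interpretations, ontologies. -/

inductive Concept (Cn R : Type) : Type where
  | top  : Concept Cn R
  | bot  : Concept Cn R
  | name : Cn → Concept Cn R
  | neg  : Concept Cn R → Concept Cn R
  | conj : Concept Cn R → Concept Cn R → Concept Cn R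
  | disj : Concept Cn R → Concept Cn R → Concept Cn R
  | ex   : R → Concept Cn R → Concept Cn R
  | all  : R → Concept Cn R → Concept Cn R
  deriving DecidableEq

namespace Concept
variable {Cn R : Type}

/-- `EL` concepts: only ⊤, concept names, ⊓ and ∃r.C. -/
def isEL : Concept Cn R → Prop
  | top => True
  | bot => False
  | name _ => True
  | neg _ => False
  | conj c d => c.isEL ∧ d.isEL
  | disj _ _ => False
  | ex _ c => c.isEL
  | all _ _ => False

/-- `ELU` concepts: additionally allow ⊔. -/
def isELU : Concept Cn R → Prop
  | top => True
  | bot => False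
  | name _ => True
  | neg _ => False
  | conj c d => c.isELU ∧ d.isELU
  | disj c d => c.isELU ∧ d.isELU
  | ex _ c => c.isELU
  | all _ _ => False

/-- `EL⊥` concepts. -/
def isELbot : Concept Cn R → Prop
  | top => True
  | bot => True
  | name _ => True
  | neg _ => False
  | conj c d => c.isELbot ∧ d.isELbot
  | disj _ _ => False
  | ex _ c => c.isELbot
  | all _ _ => False

/-- `ELU⊥` concepts. -/
def isELUbot : Concept Cn R → Prop
  | top => True
  | bot => True
  | name _ => True
  | neg _ => False
  | conj c d => c.isELUbot ∧ d.isELUbot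
  | disj c d => c.isELUbot ∧ d.isELUbot
  | ex _ c => c.isELUbot
  | all _ _ => False

/-- the nesting depth of ∃/∀ restrictions. -/
def depth : Concept Cn R → ℕ
  | top => 0
  | bot => 0
  | name _ => 0
  | neg c => c.depth
  | conj c d => max c.depth d.depth
  | disj c d => max c.depth d.depth
  | ex _ c => c.depth + 1
  | all _ c => c.depth + 1

/-- size of a concept (occurrences of symbols). -/
def size : Concept Cn R → ℕ
  | top => 1
  | bot => 1
  | name _ => 1
  | neg c => c.size + 1
  | conj c d => c.size + d.size + 1
  | disj c d => c.size + d.size + 1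
  | ex _ c => c.size + 2
  | all _ c => c.size + 2

/-- set of subconcepts. -/
def sub : Concept Cn R → Set (Concept Cn R)
  | top => {top}
  | bot => {bot}
  | name A => {name A}
  | neg c => insert (neg c) c.sub
  | conj c d => insert (conj c d) (c.sub ∪ d.sub)
  | disj c d => insert (disj c d) (c.sub ∪ d.sub)
  | ex r c => insert (ex r c) c.sub
  | all r c => insert (all r c) c.sub

/-- concept names occurring in a concept. -/
def names : Concept Cn R → Set Cn
  | top => ∅
  | bot => ∅
  | name A => {A}
  | neg c => c.names
  | conj c d => c.names ∪ d.names
  | disj c d => c.names ∪ d.names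
  | ex _ c => c.names
  | all _ c => c.names

/-- role names occurring in a concept. -/
def roles : Concept Cn R → Set R
  | top => ∅
  | bot => ∅
  | name _ => ∅
  | neg c => c.roles
  | conj c d => c.roles ∪ d.roles
  | disj c d => c.roles ∪ d.roles
  | ex r c => insert r c.roles
  | all r c => insert r c.roles

/-- top-level conjuncts of a concept. -/
def tlConj : Concept Cn R → Set (Concept Cn R)
  | conj c d => c.tlConj ∪ d.tlConj
  | c => {c}

end Concept

/-- n-fold nesting of ∃r applied to a concept. -/
def exN {Cn R : Type} (r : R) : ℕ → Concept Cn R → Concept Cn R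
  | 0, c => c
  | n + 1, c => Concept.ex r (exN r n c)

/-- An interpretation: a domain together with extensions of concept and role names. -/
structure Interp (Cn R : Type) : Type 1 where
  Dom : Type
  cI : Cn → Set Dom
  rI : R → Set (Dom × Dom)

/-- Semantics of concepts. -/
def Interp.interp {Cn R : Type} (I : Interp Cn R) : Concept Cn R → Set I.Dom
  | .top => Set.univ
  | .bot => ∅
  | .name A => I.cI A
  | .neg c => (I.interp c)ᶜ
  | .conj c d => I.interp c ∩ I.interp d
  | .disj c d => I.interp c ∪ I.interp d
  | .ex r c => {x | ∃ y, (x, y) ∈ I.rI r ∧ y ∈ I.interp c}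
  | .all r c => {x | ∀ y, (x, y) ∈ I.rI r → y ∈ I.interp c}

/-- An ontology: a set of concept inclusions `C ⊑ D`, coded as pairs `(C, D)`. -/
abbrev Ontology (Cn R : Type) := Set (Concept Cn R × Concept Cn R)

/-- `I` is a model of the ontology `O`. -/
def Interp.isModel {Cn R : Type} (I : Interp Cn R) (O : Ontology Cn R) : Prop :=
  ∀ ci ∈ O, I.interp ci.1 ⊆ I.interp ci.2

/-- `O ⊨ c ⊑ d`. -/
def entails {Cn R : Type} (O : Ontology Cn R) (c d : Concept Cn R) : Prop :=
  ∀ I : Interp Cn R, I.isModel O → I.interp c ⊆ I.interp d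

/-- logical equivalence (w.r.t. the empty ontology). -/
def lequiv {Cn R : Type} (c d : Concept Cn R) : Prop :=
  entails ∅ c d ∧ entails ∅ d c

/-- set of subconcepts of an ontology. -/
def subO {Cn R : Type} (O : Ontology Cn R) : Set (Concept Cn R) :=
  {F | ∃ ci ∈ O, F ∈ ci.1.sub ∪ ci.2.sub}

/-- concept names of an ontology. -/
def sigC {Cn R : Type} (O : Ontology Cn R) : Set Cn :=
  {A | ∃ ci ∈ O, A ∈ ci.1.names ∪ ci.2.names}

/-- role names of an ontology. -/
def sigR {Cn R : Type} (O : Ontology Cn R) : Set R :=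
  {r | ∃ ci ∈ O, r ∈ ci.1.roles ∪ ci.2.roles}



section Aux
variable {Cn R : Type}

open Concept

/-- membership of a concept in its own `sub`. -/
lemma mem_sub_self (c : Concept Cn R) : c ∈ c.sub := by
  cases c <;> simp [Concept.sub]

lemma sub_conj_left {c d : Concept Cn R} {F : Concept Cn R} (h : F ∈ c.sub) :
    F ∈ (Concept.conj c d).sub := by
  simp only [Concept.sub, Set.mem_insert_iff, Set.mem_union]; tauto

lemma sub_conj_right {c d : Concept Cn R} {F : Concept Cn R} (h : F ∈ d.sub) :
    F ∈ (Concept.conj c d).sub := by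
  simp only [Concept.sub, Set.mem_insert_iff, Set.mem_union]; tauto

lemma sub_disj_left {c d : Concept Cn R} {F : Concept Cn R} (h : F ∈ c.sub) :
    F ∈ (Concept.disj c d).sub := by
  simp only [Concept.sub, Set.mem_insert_iff, Set.mem_union]; tauto

lemma sub_disj_right {c d : Concept Cn R} {F : Concept Cn R} (h : F ∈ d.sub) :
    F ∈ (Concept.disj c d).sub := by
  simp only [Concept.sub, Set.mem_insert_iff, Set.mem_union]; tauto

lemma isEL_isELU : ∀ c : Concept Cn R, c.isEL → c.isELU := by
  intro c
  induction c with
  | top => intro; trivial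
  | bot => intro h; exact h.elim
  | name _ => intro; trivial
  | neg c ih => intro h; exact h.elim
  | conj c d ihc ihd => intro h; exact ⟨ihc h.1, ihd h.2⟩
  | disj c d ihc ihd => intro h; exact h.elim
  | ex s c ih => intro h; exact ih h
  | all s c ih => intro h; exact h.elim

lemma tlConj_isEL : ∀ c : Concept Cn R, c.isEL → ∀ F ∈ c.tlConj, F.isEL := by
  intro c
  induction c with
  | conj c d ihc ihd =>
      intro h F hF
      rcases hF with hF | hF
      · exact ihc h.1 F hF
      · exact ihd h.2 F hF
  | top => rintro h F rfl; exact h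
  | bot => rintro h F rfl; exact h
  | name A => rintro h F rfl; exact h
  | neg c ih => rintro h F rfl; exact h
  | disj c d ihc ihd => rintro h F rfl; exact h
  | ex s c ih => rintro h F rfl; exact h
  | all s c ih => rintro h F rfl; exact h

/-- The full one-point interpretation. -/
def fullI : Interp Cn R := ⟨PUnit, fun _ => Set.univ, fun _ => Set.univ⟩

lemma fullI_interp : ∀ c : Concept Cn R, c.isELU →
    (fullI (Cn := Cn) (R := R)).interp c = Set.univ := by
  intro c
  induction c with
  | top => intro _; rfl
  | bot => intro h; exact h.elim
  | name A => intro _; rfl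
  | neg c ih => intro h; exact h.elim
  | conj c d ihc ihd =>
      intro h
      show (fullI.interp c ∩ fullI.interp d) = Set.univ
      rw [ihc h.1, ihd h.2, Set.univ_inter]
  | disj c d ihc ihd =>
      intro h
      show (fullI.interp c ∪ fullI.interp d) = Set.univ
      rw [ihc h.1, Set.univ_union]
  | ex s c ih =>
      intro h
      ext x
      simp only [Set.mem_univ, iff_true]
      exact ⟨PUnit.unit, trivial, by rw [ih h]; trivial⟩
  | all s c ih => intro h; exact h.elim

lemma fullI_isModel (O : Ontology Cn R) (hO : ∀ ci ∈ O, ci.2.isELU) :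
    (fullI (Cn := Cn) (R := R)).isModel O := by
  intro ci hci x _
  rw [fullI_interp ci.2 (hO ci hci)]
  trivial

/-- Countermodel extraction. -/
lemma not_entails {O : Ontology Cn R} {c d : Concept Cn R} (h : ¬ entails O c d) :
    ∃ I : Interp Cn R, I.isModel O ∧ ∃ x, x ∈ I.interp c ∧ x ∉ I.interp d := by
  unfold entails at h
  push_neg at h
  obtain ⟨I, hm, hns⟩ := h
  exact ⟨I, hm, Set.not_subset.mp hns⟩

/- The big countermodel construction. -/
variable {ι : Type} (rl : ι → R) (M : ι → Interp Cn R) (pt : ∀ i, (M i).Dom)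

def BigI : Interp Cn R where
  Dom := Option ((i : ι) × (M i).Dom)
  cI A := fun a => match a with
    | none => True
    | some z => z.2 ∈ (M z.1).cI A
  rI s := fun p => match p with
    | (none, b) => ∃ i, b = some ⟨i, pt i⟩ ∧ rl i = s
    | (some z, b) => ∃ y, b = some ⟨z.1, y⟩ ∧ (z.2, y) ∈ (M z.1).rI s

lemma big_pres : ∀ (c : Concept Cn R) (i : ι) (x : (M i).Dom),
    (some ⟨i, x⟩ ∈ (BigI rl M pt).interp c) ↔ x ∈ (M i).interp c := by
  intro c
  induction c with
  | top => intro i x; simp [Interp.interp]; trivial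
  | bot => intro i x; simp [Interp.interp]; exact fun h => h
  | name A => intro i x; exact Iff.rfl
  | neg c ih => intro i x; exact not_congr (ih i x)
  | conj c d ihc ihd => intro i x; exact and_congr (ihc i x) (ihd i x)
  | disj c d ihc ihd => intro i x; exact or_congr (ihc i x) (ihd i x)
  | ex s c ih =>
      intro i x
      constructor
      · rintro ⟨b, hb, hbc⟩
        obtain ⟨y, rfl, he⟩ := hb
        exact ⟨y, he, (ih i y).mp hbc⟩
      · rintro ⟨y, he, hy⟩
        exact ⟨some ⟨i, y⟩, ⟨y, rfl, he⟩, (ih i y).mpr hy⟩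
  | all s c ih =>
      intro i x
      constructor
      · intro h y hy
        exact (ih i y).mp (h (some ⟨i, y⟩) ⟨y, rfl, hy⟩)
      · rintro h b hb
        obtain ⟨y, rfl, he⟩ := hb
        exact (ih i y).mpr (h y he)

lemma big_root : ∀ F : Concept Cn R, F.isELU →
    (∀ s E, Concept.ex s E ∈ F.sub → ∃ i, rl i = s ∧ pt i ∈ (M i).interp E) →
    none ∈ (BigI rl M pt).interp F := by
  intro F
  induction F with
  | top => intro _ _; trivial
  | bot => intro h; exact h.elim
  | name A => intro _ _; trivial
  | neg c ih => intro h; exact h.elim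
  | conj c d ihc ihd =>
      intro h hsub
      exact ⟨ihc h.1 (fun s E hE => hsub s E (sub_conj_left hE)),
             ihd h.2 (fun s E hE => hsub s E (sub_conj_right hE))⟩
  | disj c d ihc ihd =>
      intro h hsub
      exact Or.inl (ihc h.1 (fun s E hE => hsub s E (sub_disj_left hE)))
  | ex s c ih =>
      intro h hsub
      obtain ⟨i, rfl, hpt⟩ := hsub s c (mem_sub_self _)
      exact ⟨some ⟨i, pt i⟩, ⟨i, rfl, rfl⟩, (big_pres rl M pt c i (pt i)).mpr hpt⟩
  | all s c ih => intro h; exact h.elim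

lemma big_model (O : Ontology Cn R) (hO : ∀ ci ∈ O, ci.2.isELU)
    (hM : ∀ i, (M i).isModel O)
    (hgen : ∀ s E, (∃ ci ∈ O, Concept.ex s E ∈ ci.2.sub) →
      ∃ i, rl i = s ∧ pt i ∈ (M i).interp E) :
    (BigI rl M pt).isModel O := by
  intro ci hci a ha
  match a with
  | none =>
      exact big_root rl M pt ci.2 (hO ci hci)
        (fun s E hE => hgen s E ⟨ci, hci, hE⟩)
  | some ⟨i, x⟩ =>
      exact (big_pres rl M pt ci.2 i x).mpr
        (hM i ci hci ((big_pres rl M pt ci.1 i x).mp ha))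

lemma big_rootC : ∀ c : Concept Cn R, c.isEL →
    (∀ s E, Concept.ex s E ∈ c.tlConj → ∃ i, rl i = s ∧ pt i ∈ (M i).interp E) →
    none ∈ (BigI rl M pt).interp c := by
  intro c
  induction c with
  | top => intro _ _; trivial
  | bot => intro h; exact h.elim
  | name A => intro _ _; trivial
  | neg c ih => intro h; exact h.elim
  | conj c d ihc ihd =>
      intro h htl
      exact ⟨ihc h.1 (fun s E hE => htl s E (Or.inl hE)),
             ihd h.2 (fun s E hE => htl s E (Or.inr hE))⟩
  | disj c d ihc ihd => intro h; exact h.elim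
  | ex s c ih =>
      intro h htl
      obtain ⟨i, rfl, hpt⟩ := htl s c rfl
      exact ⟨some ⟨i, pt i⟩, ⟨i, rfl, rfl⟩, (big_pres rl M pt c i (pt i)).mpr hpt⟩
  | all s c ih => intro h; exact h.elim

lemma big_notex (r : R) (D : Concept Cn R)
    (hpt : ∀ i, rl i = r → pt i ∉ (M i).interp D) :
    none ∉ (BigI rl M pt).interp (.ex r D) := by
  rintro ⟨b, hb, hbD⟩
  obtain ⟨i, rfl, hrl⟩ := hb
  exact hpt i hrl ((big_pres rl M pt D i (pt i)).mp hbD)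

/-- A pointed model witness. -/
structure Witness (O : Ontology Cn R) (c D : Concept Cn R) (r s : R) : Type 1 where
  I : Interp Cn R
  x : I.Dom
  hm : I.isModel O
  hc : x ∈ I.interp c
  hd : s = r → x ∉ I.interp D

end Aux

/- STATEMENT 7: if O ⊨ C ⊑ ∃r.D and no top-level conjunct ∃r.C' of C satisfies
   O ⊨ C' ⊑ D, then D is O-generatable. -/

theorem stmt7 {Cn R : Type} (O : Ontology Cn R)
    (hO : ∀ ci ∈ O, ci.1.isELU ∧ ci.2.isELU)
    (C D : Concept Cn R) (r : R) (hC : C.isEL) (hD : D.isEL)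
    (hent : entails O C (.ex r D))
    (htl : ¬ ∃ C', Concept.ex r C' ∈ C.tlConj ∧ entails O C' D) :
    ∃ (r' : R) (E : Concept Cn R),
      (∃ ci ∈ O, Concept.ex r' E ∈ ci.2.sub) ∧ entails O E D := by
  by_contra hcon
  push_neg at hcon
  push_neg at htl
  -- index type
  set ι := {p : R × Concept Cn R //
      Concept.ex p.1 p.2 ∈ C.tlConj ∨ ∃ ci ∈ O, Concept.ex p.1 p.2 ∈ ci.2.sub} with hι
  have key : ∀ i : ι, Nonempty (Witness O i.1.2 D r i.1.1) := by
    rintro ⟨⟨s, E⟩, hi⟩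
    by_cases hsr : s = r
    · subst hsr
      have hne : ¬ entails O E D := by
        rcases hi with hi | hi
        · exact htl E hi
        · obtain ⟨ci, hci, hsub⟩ := hi
          exact hcon s E ⟨ci, hci, hsub⟩
      obtain ⟨I, hm, x, hx, hxd⟩ := not_entails hne
      exact ⟨I, x, hm, hx, fun _ => hxd⟩
    · rcases hi with hi | hi
      · -- top-level conjunct with role ≠ r : use the full one-point model
        refine ⟨fullI, PUnit.unit, fullI_isModel O (fun ci hci => (hO ci hci).2), ?_,
          fun h => absurd h hsr⟩
        rw [fullI_interp E (isEL_isELU E ((tlConj_isEL C hC (Concept.ex s E) hi : E.isEL)))]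
        trivial
      · obtain ⟨ci, hci, hsub⟩ := hi
        obtain ⟨I, hm, x, hx, hxd⟩ := not_entails (hcon s E ⟨ci, hci, hsub⟩)
        exact ⟨I, x, hm, hx, fun h => absurd h hsr⟩
  let W : ∀ i : ι, Witness O i.1.2 D r i.1.1 := fun i => (key i).some
  let rl : ι → R := fun i => i.1.1
  let M : ι → Interp Cn R := fun i => (W i).I
  let pt : ∀ i, (M i).Dom := fun i => (W i).x
  have hmodel : (BigI rl M pt).isModel O :=
    big_model rl M pt O (fun ci hci => (hO ci hci).2) (fun i => (W i).hm)
      (fun s E h => ⟨⟨(s, E), Or.inr h⟩, rfl, (W ⟨(s, E), Or.inr h⟩).hc⟩)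
  have hroot : none ∈ (BigI rl M pt).interp C :=
    big_rootC rl M pt C hC
      (fun s E h => ⟨⟨(s, E), Or.inl h⟩, rfl, (W ⟨(s, E), Or.inl h⟩).hc⟩)
  have hnot : none ∉ (BigI rl M pt).interp (.ex r D) :=
    big_notex rl M pt r D (fun i h => (W i).hd h)
  exact hnot (hent (BigI rl M pt) hmodel hroot)
end DL
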